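/- If a k-hypergraph H of dimension d is pre m-isolated, then H is m-isolated. -/

import Mathlib

/-- A hypergraph (of dimension `d`) over the data domain `ℕ`, represented by its
weight function: a finitely supported function from finite sets of data values
(potential hyperedges) to weight vectors in `ℤ^d`.  Isolated vertices are
irrelevant (hypergraphs are identified up to isolated vertices). -/
abbrev HG (d : ℕ) := (Finset ℕ) →₀ (Fin d → ℤ)

/-- `H` is a `k`-hypergraph: every hyperedge (set with nonzero weight) has `k` elements. -/
def IsHG (k : ℕ) {d : ℕ} (H : HG d) : Prop := ∀ e ∈ H.support, e.card = k

/-- The (non-isolated) vertices of `H`: the union of its hyperedges. -/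
def verts {d : ℕ} (H : HG d) : Finset ℕ := H.support.sup id

/-- The weight `w_X(H)` of a finite set `X`: the sum of the weights of all
hyperedges of `H` that contain `X`. -/
def weight {d : ℕ} (X : Finset ℕ) (H : HG d) : Fin d → ℤ :=
  ∑ e ∈ H.support.filter (fun e => X ⊆ e), H e
/-- `H` is `m`-isolated: `w_X(H) = 0` for every set `X` of vertices of `H`
with `|X| ≤ m`. -/
def IsIsolated {d : ℕ} (m : ℕ) (H : HG d) : Prop :=
  ∀ X : Finset ℕ, X ⊆ verts H → X.card ≤ m → weight X H = 0
/-- `H` is pre `m`-isolated: `H` is `(m−1)`-isolated, and there is a set `X`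
of vertices of `H` with `|X| ≤ 2m−1` such that `w_Y(H) = 0` for every
`m`-element set `Y` of vertices not contained in `X`. -/
def PreIsolated {d : ℕ} (m : ℕ) (H : HG d) : Prop :=
  IsIsolated (m - 1) H ∧
  ∃ X : Finset ℕ, X ⊆ verts H ∧ X.card ≤ 2 * m - 1 ∧
    ∀ Y : Finset ℕ, Y ⊆ verts H → Y.card = m → ¬ Y ⊆ X → weight Y H = 0

namespace HGaux

open Finset

/-- The coefficients used in the linear combination of the equations. -/
def c (m j : ℕ) : ℤ := (-1) ^ j * j.factorial * (m - 1 - j).factorial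

lemma key (m a b : ℕ) (h : m = a + b + 2) :
    (a + 1) • c m a + (b + 1) • c m (a + 1) = 0 := by
  subst h
  have h1 : a + b + 2 - 1 - a = b + 1 := by omega
  have h2 : a + b + 2 - 1 - (a + 1) = b := by omega
  simp only [c, h1, h2, Nat.factorial_succ, pow_succ, nsmul_eq_mul]
  push_cast
  ring

lemma edge_subset_verts {d : ℕ} (H : HG d) {e : Finset ℕ} (he : e ∈ H.support) :
    e ⊆ verts H := Finset.le_sup (f := id) he

lemma weight_def {d : ℕ} (X : Finset ℕ) (H : HG d) :
    weight X H = ∑ e ∈ H.support, if X ⊆ e then H e else 0 := by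
  rw [weight, Finset.sum_filter]

lemma weight_zero {d : ℕ} (H : HG d) {Z : Finset ℕ} (h : ¬ Z ⊆ verts H) :
    weight Z H = 0 := by
  rw [weight_def]
  exact Finset.sum_eq_zero fun e he =>
    if_neg fun hZe => h (hZe.trans (edge_subset_verts H he))

lemma handshake {d : ℕ} (k : ℕ) (H : HG d) (hH : IsHG k H) (Z : Finset ℕ) :
    ∑ v ∈ verts H \ Z, weight (insert v Z) H = (k - Z.card) • weight Z H := by
  simp only [weight_def, Finset.smul_sum]
  rw [Finset.sum_comm]
  refine Finset.sum_congr rfl fun e he => ?_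
  by_cases hZe : Z ⊆ e
  · have h1 : ∀ v : ℕ, insert v Z ⊆ e ↔ v ∈ e := fun v => by
      rw [Finset.insert_subset_iff]
      exact ⟨fun h => h.1, fun h => ⟨h, hZe⟩⟩
    simp only [h1, if_pos hZe]
    rw [Finset.sum_ite_mem, Finset.sum_const]
    have heq : (verts H \ Z) ∩ e = e \ Z := by
      have hev := edge_subset_verts H he
      ext v
      simp only [Finset.mem_inter, Finset.mem_sdiff]
      exact ⟨fun h => ⟨h.2, h.1.2⟩, fun h => ⟨⟨hev h.1, h.2⟩, h.1⟩⟩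
    rw [heq, Finset.card_sdiff_of_subset hZe, hH e he]
  · simp only [if_neg hZe, smul_zero]
    exact Finset.sum_eq_zero fun v _ =>
      if_neg fun h => hZe ((Finset.subset_insert v Z).trans h)

end HGaux

/-- **Lemma.** If a `k`-hypergraph `H` of dimension `d` is pre `m`-isolated,
then `H` is `m`-isolated. -/
theorem preIsolated_isolated
    (k d m : ℕ) (hk : 1 ≤ k) (hd : 1 ≤ d)
    (H : HG d) (hH : IsHG k H) (hpre : PreIsolated m H) :
    IsIsolated m H := by
  classical
  obtain ⟨hiso, X, hXV, hXcard, hX⟩ := hpre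
  intro Y hYV hYm
  rcases lt_or_eq_of_le hYm with hlt | hYcard
  · exact hiso Y hYV (by omega)
  rcases Nat.eq_zero_or_pos m with rfl | hm
  · exact hiso Y hYV (by omega)
  by_cases hYX : Y ⊆ X
  swap
  · exact hX Y hYV hYcard hYX
  -- Main case: `Y ⊆ X`, `Y.card = m`, `m ≥ 1`.
  set C : Finset ℕ := X \ Y with hC
  -- The equations: for every `(m-1)`-subset `Z` of `X`,
  -- the sum of `w_{Z ∪ {v}}` over `v ∈ X \ Z` is zero.
  have hE : ∀ Z ∈ X.powersetCard (m - 1), ∑ v ∈ X \ Z, weight (insert v Z) H = 0 := by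
    intro Z hZ
    rw [Finset.mem_powersetCard] at hZ
    obtain ⟨hZX, hZcard⟩ := hZ
    have hwZ : weight Z H = 0 := hiso Z (hZX.trans hXV) (le_of_eq hZcard)
    have hhs := HGaux.handshake k H hH Z
    rw [hwZ, smul_zero] at hhs
    have hsub : X \ Z ⊆ verts H \ Z := Finset.sdiff_subset_sdiff hXV (le_refl _)
    have hA : ∑ v ∈ (verts H \ Z) \ (X \ Z), weight (insert v Z) H = 0 := by
      refine Finset.sum_eq_zero fun v hv => ?_
      simp only [Finset.mem_sdiff] at hv
      have hvV : v ∈ verts H := hv.1.1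
      have hvZ : v ∉ Z := hv.1.2
      have hvX : v ∉ X := fun hvX => hv.2 ⟨hvX, hvZ⟩
      refine hX (insert v Z) (Finset.insert_subset hvV (hZX.trans hXV)) ?_ ?_
      · rw [Finset.card_insert_of_notMem hvZ, hZcard]; omega
      · exact fun h => hvX (h (Finset.mem_insert_self v Z))
    have h2 : (∑ v ∈ (verts H \ Z) \ (X \ Z), weight (insert v Z) H)
        + ∑ v ∈ X \ Z, weight (insert v Z) H = 0 := by
      rw [Finset.sum_sdiff hsub]; exact hhs
    rw [hA, zero_add] at h2
    exact h2
  -- The weighted combination of all equations is zero.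
  have hS : ∑ Z ∈ X.powersetCard (m - 1), ∑ v ∈ X \ Z,
      HGaux.c m (Z ∩ C).card • weight (insert v Z) H = 0 := by
    refine Finset.sum_eq_zero fun Z hZ => ?_
    rw [← Finset.smul_sum, hE Z hZ, smul_zero]
  -- Reindex the double sum by the pairs `(W, v)` with `W = insert v Z`.
  have hS2 : ∑ Z ∈ X.powersetCard (m - 1), ∑ v ∈ X \ Z,
        HGaux.c m (Z ∩ C).card • weight (insert v Z) H
      = ∑ W ∈ X.powersetCard m, ∑ v ∈ W,
        HGaux.c m ((W.erase v) ∩ C).card • weight W H := by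
    rw [Finset.sum_sigma', Finset.sum_sigma']
    refine Finset.sum_bij' (fun p _ => ⟨insert p.2 p.1, p.2⟩)
      (fun p _ => ⟨p.1.erase p.2, p.2⟩) ?_ ?_ ?_ ?_ ?_
    · rintro ⟨Z, v⟩ hp
      simp only [Finset.mem_sigma, Finset.mem_powersetCard, Finset.mem_sdiff,
        Finset.mem_insert] at hp ⊢
      obtain ⟨⟨hZX, hZc⟩, hvX, hvZ⟩ := hp
      refine ⟨⟨Finset.insert_subset hvX hZX, ?_⟩, Or.inl trivial⟩
      rw [Finset.card_insert_of_notMem hvZ, hZc]; omega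
    · rintro ⟨W, v⟩ hp
      simp only [Finset.mem_sigma, Finset.mem_powersetCard, Finset.mem_sdiff] at hp ⊢
      obtain ⟨⟨hWX, hWc⟩, hvW⟩ := hp
      exact ⟨⟨(Finset.erase_subset v W).trans hWX,
        by rw [Finset.card_erase_of_mem hvW, hWc]⟩, hWX hvW, Finset.notMem_erase v W⟩
    · rintro ⟨Z, v⟩ hp
      simp only [Finset.mem_sigma, Finset.mem_sdiff] at hp
      simp [Finset.erase_insert hp.2.2]
    · rintro ⟨W, v⟩ hp
      simp only [Finset.mem_sigma] at hp
      simp [Finset.insert_erase hp.2]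
    · rintro ⟨Z, v⟩ hp
      simp only [Finset.mem_sigma, Finset.mem_sdiff] at hp
      rw [Finset.erase_insert hp.2.2]
  -- Evaluate the reindexed sum: only the term `W = Y` survives,
  -- with coefficient `m!`.
  have hYC : ∀ v : ℕ, ((Y.erase v) ∩ C).card = 0 := by
    intro v
    rw [Finset.card_eq_zero, Finset.eq_empty_iff_forall_notMem]
    intro x hx
    simp only [hC, Finset.mem_inter, Finset.mem_erase, Finset.mem_sdiff] at hx
    exact hx.2.2 hx.1.2
  have hS3 : ∑ W ∈ X.powersetCard m, ∑ v ∈ W,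
        HGaux.c m ((W.erase v) ∩ C).card • weight W H
      = (m.factorial : ℤ) • weight Y H := by
    rw [Finset.sum_eq_single_of_mem Y
      (Finset.mem_powersetCard.mpr ⟨hYX, hYcard⟩) ?_]
    · simp only [hYC]
      rw [Finset.sum_const, hYcard, ← Nat.cast_smul_eq_nsmul ℤ, smul_smul]
      congr 1
      have : HGaux.c m 0 = ((m - 1).factorial : ℤ) := by simp [HGaux.c]
      rw [this, ← Nat.cast_mul, Nat.mul_factorial_pred hm.ne']
    · intro W hW hWY
      rw [Finset.mem_powersetCard] at hW
      obtain ⟨hWX, hWm⟩ := hW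
      rw [← Finset.sum_smul]
      have hcoeff : ∑ v ∈ W, HGaux.c m ((W.erase v) ∩ C).card = 0 := by
        set j : ℕ := (W ∩ C).card with hj
        have hj1 : 1 ≤ j := by
          by_contra h0'
          have h0 : W ∩ C = ∅ := Finset.card_eq_zero.mp (by omega)
          have hWY' : W ⊆ Y := by
            intro v hv
            by_contra hvY
            have hvC : v ∈ C := by
              simp only [hC, Finset.mem_sdiff]; exact ⟨hWX hv, hvY⟩
            have hmem : v ∈ W ∩ C := Finset.mem_inter.mpr ⟨hv, hvC⟩
            rw [h0] at hmem
            exact absurd hmem (Finset.notMem_empty v)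
          exact hWY (Finset.eq_of_subset_of_card_le hWY' (by rw [hWm, hYcard]))
        have hj2 : j ≤ m - 1 := by
          have h1 : j ≤ C.card := Finset.card_le_card Finset.inter_subset_right
          have h2 : C.card = X.card - Y.card := by rw [hC, Finset.card_sdiff_of_subset hYX]
          omega
        have hsplit := Finset.sum_inter_add_sum_sdiff W C
          (fun v => HGaux.c m ((W.erase v) ∩ C).card)
        have hA : ∑ v ∈ W ∩ C, HGaux.c m ((W.erase v) ∩ C).card = j • HGaux.c m (j - 1) := by
          rw [← Finset.sum_const]
          refine Finset.sum_congr rfl fun v hv => ?_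
          rw [Finset.erase_inter, Finset.card_erase_of_mem hv]
        have hB : ∑ v ∈ W \ C, HGaux.c m ((W.erase v) ∩ C).card
            = (m - j) • HGaux.c m j := by
          have hcard : (W \ C).card = m - j := by
            have := Finset.card_inter_add_card_sdiff W C
            omega
          rw [← hcard, ← Finset.sum_const]
          refine Finset.sum_congr rfl fun v hv => ?_
          rw [Finset.erase_inter, Finset.erase_eq_of_notMem]
          intro hv'
          exact (Finset.mem_sdiff.mp hv).2 (Finset.mem_inter.mp hv').2
        rw [← hsplit, hA, hB]
        have hja : j - 1 = j - 1 := rfl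
        obtain ⟨a, b, hab⟩ : ∃ a b : ℕ, m = a + b + 2 ∧ j = a + 1 ∧ m - j = b + 1 := by
          exact ⟨j - 1, m - 1 - j, by omega, by omega, by omega⟩
        obtain ⟨hab1, hab2, hab3⟩ := hab
        rw [hab3, hab2, Nat.add_sub_cancel]
        exact HGaux.key m a b hab1
      rw [hcoeff, zero_smul]
  have hfin : (m.factorial : ℤ) • weight Y H = 0 := by
    rw [← hS3, ← hS2]; exact hS
  rcases smul_eq_zero.mp hfin with h | h
  · exact absurd (Int.natCast_eq_zero.mp h) m.factorial_ne_zero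
  · exact h
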